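/- For s ∈ [0, √2], one has f(s) = 0 if and only if s ∈ {0, √2} ∪ {β^k : k ∈ ℕ, k ≥ 1} ∪ {√2 − β^k : k ∈ ℕ, k ≥ 1}. -/

import Mathlib

noncomputable section

/-- `β = √2 - 1`. -/
def β : ℝ := Real.sqrt 2 - 1

/-- `ω = √2 + 1`. -/
def ω : ℝ := Real.sqrt 2 + 1

/-- The break points `Δ_i`. -/
def Δ (i : ℤ) : ℝ :=
  if i < 0 then β ^ i.natAbs
  else if i = 0 then β
  else Real.sqrt 2 - β ^ i.natAbs

/-- The intervals `I_i`. -/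
def Iint (i : ℤ) : Set ℝ :=
  if i < 0 then Set.Ioc (Δ (i - 1)) (Δ i)
  else if i = 0 then Set.Ioo β 1
  else Set.Ico (Δ i) (Δ (i + 1))

/-- The defining formula of `f` on the interval `I_i`. -/
def fval (i : ℤ) (s : ℝ) : ℝ :=
  if i < 0 then ω ^ (i.natAbs + 1) * (Δ i - s)
  else if i = 0 then ω * (s - β)
  else ω ^ (i.natAbs + 1) * (s - Δ i)

/-- `f` is the renormalization map: `f 0 = f √2 = 0` and on each interval `I_i`
    it is given by the corresponding affine formula. These conditions determine
    `f` uniquely on `[0, √2]`. -/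
def IsLuroth (f : ℝ → ℝ) : Prop :=
  f 0 = 0 ∧ f (Real.sqrt 2) = 0 ∧ ∀ i : ℤ, ∀ s ∈ Iint i, f s = fval i s

/-- `ℚ(√2)` as a subset of `ℝ`. -/
def QSqrt2 : Set ℝ := {x | ∃ a b : ℚ, x = (a : ℝ) + (b : ℝ) * Real.sqrt 2}

/-- `ℤ[√2]` as a subset of `ℝ`. -/
def ZSqrt2 : Set ℝ := {x | ∃ m n : ℤ, x = (m : ℝ) + (n : ℝ) * Real.sqrt 2}

/-- `M_d = {s ∈ [0,√2] : d·s ∈ ℤ[√2]}`. -/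
def Mset (d : ℤ) : Set ℝ :=
  {s | s ∈ Set.Icc 0 (Real.sqrt 2) ∧ (d : ℝ) * s ∈ ZSqrt2}

lemma sqrt2_gt_one : 1 < Real.sqrt 2 := by
  have := Real.lt_sqrt (x := 1) (y := 2) (by norm_num)
  rw [this]; norm_num

lemma sqrt2_lt_two : Real.sqrt 2 < 2 := by
  have := Real.sqrt_lt' (x := 2) (y := 2) (by norm_num)
  rw [this]; norm_num

lemma beta_pos : 0 < β := by unfold β; linarith [sqrt2_gt_one]
lemma beta_lt_one : β < 1 := by unfold β; linarith [sqrt2_lt_two]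
lemma omega_pos : 0 < ω := by unfold ω; linarith [sqrt2_gt_one]

lemma Delta_neg (n : ℕ) (hn : 1 ≤ n) : Δ (-(n : ℤ)) = β ^ n := by
  have h : (-(n : ℤ)) < 0 := by omega
  simp [Δ, h]
  intro h0; omega

lemma Delta_pos' (n : ℕ) (hn : 1 ≤ n) : Δ (n : ℤ) = Real.sqrt 2 - β ^ n := by
  have h1 : ¬ ((n : ℤ) < 0) := by omega
  have h2 : (n : ℤ) ≠ 0 := by omega
  simp [Δ, h1, h2]
  intro h0; omega

lemma mem_Iint_neg (n : ℕ) (hn : 1 ≤ n) (s : ℝ) (h1 : β ^ (n + 1) < s)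
    (h2 : s ≤ β ^ n) : s ∈ Iint (-(n : ℤ)) := by
  have h : (-(n : ℤ)) < 0 := by omega
  have e1 : (-(n : ℤ)) - 1 = -((n + 1 : ℕ) : ℤ) := by push_cast; ring
  rw [Iint, if_pos h, e1, Delta_neg (n+1) (by omega), Delta_neg n hn]
  exact ⟨h1, h2⟩

lemma mem_Iint_pos (n : ℕ) (hn : 1 ≤ n) (s : ℝ)
    (h1 : Real.sqrt 2 - β ^ n ≤ s) (h2 : s < Real.sqrt 2 - β ^ (n + 1)) :
    s ∈ Iint (n : ℤ) := by
  have h : ¬ ((n : ℤ) < 0) := by omega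
  have h2' : (n : ℤ) ≠ 0 := by omega
  have e1 : (n : ℤ) + 1 = ((n + 1 : ℕ) : ℤ) := by push_cast; ring
  rw [Iint, if_neg h, if_neg h2', e1, Delta_pos' (n+1) (by omega), Delta_pos' n hn]
  exact ⟨h1, h2⟩

lemma fval_neg (n : ℕ) (hn : 1 ≤ n) (s : ℝ) :
    fval (-(n : ℤ)) s = ω ^ (n + 1) * (β ^ n - s) := by
  have h : (-(n : ℤ)) < 0 := by omega
  rw [fval, if_pos h, Delta_neg n hn]
  congr 2
  omega

lemma fval_pos (n : ℕ) (hn : 1 ≤ n) (s : ℝ) :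
    fval (n : ℤ) s = ω ^ (n + 1) * (s - (Real.sqrt 2 - β ^ n)) := by
  have h : ¬ ((n : ℤ) < 0) := by omega
  have h2 : (n : ℤ) ≠ 0 := by omega
  rw [fval, if_neg h, if_neg h2, Delta_pos' n hn]
  congr 2

/-- For `0 < s ≤ β` there is `n ≥ 1` with `β^(n+1) < s ≤ β^n`. -/
lemma exists_pow_sandwich (s : ℝ) (h0 : 0 < s) (h1 : s ≤ β) :
    ∃ n : ℕ, 1 ≤ n ∧ β ^ (n + 1) < s ∧ s ≤ β ^ n := by
  classical
  obtain ⟨m, hm⟩ := exists_pow_lt_of_lt_one h0 beta_lt_one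
  have hP : ∃ k, β ^ k < s := ⟨m, hm⟩
  set m0 := Nat.find hP with hm0def
  have hspec : β ^ m0 < s := Nat.find_spec hP
  have key : ∀ k < 2, ¬ β ^ k < s := by
    intro k hk
    interval_cases k
    · simp only [pow_zero, not_lt]; linarith [beta_lt_one]
    · rw [pow_one]; linarith
  have h2 : 2 ≤ m0 := by
    by_contra hlt
    push_neg at hlt
    exact key m0 hlt hspec
  refine ⟨m0 - 1, by omega, ?_, ?_⟩
  · have : m0 - 1 + 1 = m0 := by omega
    rw [this]; exact hspec
  · have := Nat.find_min hP (m := m0 - 1) (by omega)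
    linarith [not_lt.mp this]

/-- the zero set of `f` in `[0,√2]` is
`{0, √2} ∪ {β^k : k ≥ 1} ∪ {√2 - β^k : k ≥ 1}`. -/
theorem luroth_zero_set (f : ℝ → ℝ) (hf : IsLuroth f) :
    ∀ s ∈ Set.Icc (0 : ℝ) (Real.sqrt 2),
      (f s = 0 ↔
        s = 0 ∨ s = Real.sqrt 2 ∨
        (∃ k : ℕ, 1 ≤ k ∧ s = β ^ k) ∨
        (∃ k : ℕ, 1 ≤ k ∧ s = Real.sqrt 2 - β ^ k)) := by
  obtain ⟨hf0, hfs, hfi⟩ := hf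
  rintro s ⟨hs0, hs2⟩
  have hω : (0:ℝ) < ω := omega_pos
  have hβ1 : β < 1 := beta_lt_one
  have hβ0 : (0:ℝ) < β := beta_pos
  constructor
  · intro hz
    rcases eq_or_lt_of_le hs0 with h0 | h0
    · exact Or.inl h0.symm
    rcases eq_or_lt_of_le hs2 with h2 | h2
    · exact Or.inr (Or.inl h2)
    -- s ∈ (0, √2)
    rcases le_or_gt s β with hcase | hcase
    · -- s ∈ (0, β]
      obtain ⟨n, hn1, hn2, hn3⟩ := exists_pow_sandwich s h0 hcase
      have hmem := hfi (-(n : ℤ)) s (mem_Iint_neg n hn1 s hn2 hn3)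
      rw [fval_neg n hn1] at hmem
      have : β ^ n - s = 0 := by
        have hωn : ω ^ (n+1) ≠ 0 := by positivity
        have := hz.symm.trans hmem
        exact (mul_eq_zero.mp this.symm).resolve_left hωn
      exact Or.inr (Or.inr (Or.inl ⟨n, hn1, by linarith⟩))
    rcases lt_or_ge s 1 with hcase2 | hcase2
    · -- s ∈ (β, 1) = I_0
      have hmem := hfi 0 s (by rw [Iint]; simp; exact ⟨hcase, hcase2⟩)
      rw [fval] at hmem
      simp at hmem
      rw [hz] at hmem
      have : s = β := by
        have := (mul_eq_zero.mp hmem.symm).resolve_left (ne_of_gt hω)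
        linarith
      linarith
    · -- s ∈ [1, √2)
      have h0' : 0 < Real.sqrt 2 - s := by linarith
      have h1' : Real.sqrt 2 - s ≤ β := by unfold β; linarith
      obtain ⟨n, hn1, hn2, hn3⟩ := exists_pow_sandwich _ h0' h1'
      have hmem := hfi (n : ℤ) s (mem_Iint_pos n hn1 s (by linarith) (by linarith))
      rw [fval_pos n hn1] at hmem
      have : s - (Real.sqrt 2 - β ^ n) = 0 := by
        have hωn : ω ^ (n+1) ≠ 0 := by positivity
        have := hz.symm.trans hmem
        exact (mul_eq_zero.mp this.symm).resolve_left hωn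
      exact Or.inr (Or.inr (Or.inr ⟨n, hn1, by linarith⟩))
  · rintro (rfl | rfl | ⟨k, hk, rfl⟩ | ⟨k, hk, rfl⟩)
    · exact hf0
    · exact hfs
    · have hmem : β ^ k ∈ Iint (-(k : ℤ)) := by
        apply mem_Iint_neg k hk _ _ le_rfl
        exact pow_lt_pow_right_of_lt_one₀ hβ0 hβ1 (by omega)
      rw [hfi _ _ hmem, fval_neg k hk]
      ring
    · have hmem : Real.sqrt 2 - β ^ k ∈ Iint (k : ℤ) := by
        apply mem_Iint_pos k hk _ le_rfl
        have : β ^ (k+1) < β ^ k := pow_lt_pow_right_of_lt_one₀ hβ0 hβ1 (by omega)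
        linarith
      rw [hfi _ _ hmem, fval_pos k hk]
      ring
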